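/- Any set P of n points in R^d can be partitioned into ⌈n/2^d⌉ sets P_1, ..., P_{⌈n/2^d⌉} such that the intersection of the convex hulls ch(P_i) is nonempty. -/

import Mathlib

noncomputable def snocAff (d : ℕ) (t : ℝ) : (Fin d → ℝ) →ᵃ[ℝ] (Fin (d + 1) → ℝ) where
  toFun v := Fin.snoc v t
  linear :=
    { toFun := fun v => Fin.snoc v 0
      map_add' := by
        intro u v; ext j
        induction j using Fin.lastCases <;> simp
      map_smul' := by
        intro c v; ext j
        induction j using Fin.lastCases <;> simp }
  map_vadd' := by
    intro q v; ext j
    induction j using Fin.lastCases <;> simp [vadd_eq_add]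

lemma cross_lemma {d : ℕ} (a b : Fin (d + 1) → ℝ) (t : ℝ)
    (ha : a (Fin.last d) ≤ t) (hb : t ≤ b (Fin.last d)) :
    ∃ z, z ∈ convexHull ℝ ({a, b} : Set (Fin (d + 1) → ℝ)) ∧ z (Fin.last d) = t := by
  rcases eq_or_lt_of_le (ha.trans hb) with heq | hlt
  · exact ⟨a, subset_convexHull ℝ _ (by simp), by linarith⟩
  · set lam := (t - a (Fin.last d)) / (b (Fin.last d) - a (Fin.last d)) with hlam
    have hd : b (Fin.last d) - a (Fin.last d) > 0 := by linarith
    have h0 : 0 ≤ lam := div_nonneg (by linarith) (by linarith)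
    have h1 : lam ≤ 1 := by rw [hlam, div_le_one hd]; linarith
    refine ⟨(1 - lam) • a + lam • b, ?_, ?_⟩
    · exact segment_subset_convexHull (by simp) (by simp)
        ⟨1 - lam, lam, by linarith, h0, by ring, rfl⟩
    · have : ((1 - lam) • a + lam • b) (Fin.last d)
          = (1 - lam) * a (Fin.last d) + lam * b (Fin.last d) := by simp
      rw [this, hlam]; field_simp; ring

lemma tverberg_aux (d : ℕ) : ∀ (n : ℕ) (p : Fin n → (Fin d → ℝ)),
    ∃ f : Fin ((n + 2 ^ d - 1) / 2 ^ d) → Finset (Fin n),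
      (∀ i, (f i).Nonempty) ∧
      (∀ i j, i ≠ j → Disjoint (f i) (f j)) ∧
      (∀ k, ∃ i, k ∈ f i) ∧
      ∃ x : Fin d → ℝ, ∀ i, x ∈ convexHull ℝ (p '' (f i)) := by
  induction d with
  | zero =>
    intro n p
    have hcast : (n + 2 ^ 0 - 1) / 2 ^ 0 = n := by simp
    refine ⟨fun i => {Fin.cast hcast i}, fun i => ⟨_, Finset.mem_singleton_self _⟩, ?_, ?_,
      fun j => j.elim0, ?_⟩
    · intro i j hij
      simp only [Finset.disjoint_singleton]
      exact fun hc => hij (Fin.ext (by simpa using congrArg Fin.val hc))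
    · intro k
      exact ⟨Fin.cast hcast.symm k, by simp [Fin.ext_iff]⟩
    · intro i
      have : (fun j : Fin 0 => j.elim0 : Fin 0 → ℝ) = p (Fin.cast hcast i) :=
        funext fun j => j.elim0
      rw [this]
      exact subset_convexHull ℝ _ ⟨_, by simp, rfl⟩
  | succ d ih =>
    intro n p
    rcases Nat.eq_zero_or_pos n with hn | hn
    · subst hn
      have hr : (0 + 2 ^ (d + 1) - 1) / 2 ^ (d + 1) = 0 :=
        Nat.div_eq_of_lt (by have := Nat.one_le_two_pow (n := d + 1); omega)
      exact ⟨fun _ => ∅, fun i => absurd i.isLt (by omega), fun i => absurd i.isLt (by omega),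
        fun k => absurd k.isLt (by omega), 0, fun i => absurd i.isLt (by omega)⟩
    · set m := (n + 1) / 2 with hm
      have hm1 : 1 ≤ m := by omega
      have hmn : m ≤ n := by omega
      set h : Fin n → ℝ := fun k => p k (Fin.last d) with hh_def
      set σ := Tuple.sort h with hσ
      have hmono : Monotone (h ∘ σ) := Tuple.monotone_sort h
      set t := h (σ ⟨m - 1, by omega⟩) with ht
      set G : Fin m → Finset (Fin n) := fun i =>
        if hh : (i : ℕ) + m < n then {σ ⟨i, by omega⟩, σ ⟨(i : ℕ) + m, hh⟩}
        else {σ ⟨i, by omega⟩} with hG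
      have hGmem : ∀ i : Fin m, σ ⟨(i : ℕ), by omega⟩ ∈ G i := by
        intro i
        simp only [hG]
        split <;> simp
      -- membership characterization
      have hGchar : ∀ (i : Fin m) (k : Fin n), k ∈ G i →
          ∃ a : ℕ, ∃ ha : a < n, k = σ ⟨a, ha⟩ ∧ ((a : ℕ) = i ∨ (a : ℕ) = (i : ℕ) + m) := by
        intro i k hk
        simp only [hG] at hk
        split at hk
        · rcases Finset.mem_insert.1 hk with hk | hk
          · exact ⟨i, by omega, hk, Or.inl rfl⟩
          · exact ⟨(i : ℕ) + m, by omega, Finset.mem_singleton.1 hk, Or.inr rfl⟩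
        · exact ⟨i, by omega, Finset.mem_singleton.1 hk, Or.inl rfl⟩
      have hGdisj : ∀ i i' : Fin m, i ≠ i' → Disjoint (G i) (G i') := by
        intro i i' hne
        rw [Finset.disjoint_left]
        intro k hk hk'
        obtain ⟨a, ha, hka, haor⟩ := hGchar i k hk
        obtain ⟨b, hb, hkb, hbor⟩ := hGchar i' k hk'
        have hab : a = b := by
          have := σ.injective (hka.symm.trans hkb)
          exact congrArg Fin.val this
        have hvne : (i : ℕ) ≠ (i' : ℕ) := fun hc => hne (Fin.ext hc)
        have hi := i.isLt
        have hi' := i'.isLt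
        omega
      -- crossing points
      have hzex : ∀ i : Fin m, ∃ z, z ∈ convexHull ℝ (p '' (G i : Set (Fin n)))
          ∧ z (Fin.last d) = t := by
        intro i
        by_cases hh : (i : ℕ) + m < n
        · have hle1 : h (σ ⟨(i : ℕ), by omega⟩) ≤ t := by
            apply hmono
            show ((⟨(i : ℕ), by omega⟩ : Fin n)) ≤ ⟨m - 1, by omega⟩
            rw [Fin.mk_le_mk]
            have := i.isLt
            omega
          have hle2 : t ≤ h (σ ⟨(i : ℕ) + m, hh⟩) := by
            apply hmono
            show ((⟨m - 1, by omega⟩ : Fin n)) ≤ ⟨(i : ℕ) + m, hh⟩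
            rw [Fin.mk_le_mk]
            omega
          obtain ⟨z, hz1, hz2⟩ := cross_lemma (p (σ ⟨(i : ℕ), by omega⟩))
            (p (σ ⟨(i : ℕ) + m, hh⟩)) t hle1 hle2
          refine ⟨z, ?_, hz2⟩
          refine convexHull_mono ?_ hz1
          intro w hw
          rcases hw with rfl | hw
          · exact ⟨σ ⟨(i : ℕ), by omega⟩, by simp [hG, hh], rfl⟩
          · rcases hw with rfl
            exact ⟨σ ⟨(i : ℕ) + m, hh⟩, by simp [hG, hh], rfl⟩
        · have him : (i : ℕ) = m - 1 := by
            have := i.isLt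
            omega
          refine ⟨p (σ ⟨(i : ℕ), by omega⟩), ?_, ?_⟩
          · exact subset_convexHull ℝ _ ⟨_, hGmem i, rfl⟩
          · show h (σ ⟨(i : ℕ), by omega⟩) = t
            rw [ht]
            congr 2
            exact Fin.ext him
      choose z hz1 hz2 using hzex
      obtain ⟨f', hne', hdisj', hcov', x', hx'⟩ := ih m (fun i => Fin.init (z i))
      have h2d : 1 ≤ 2 ^ d := Nat.one_le_two_pow
      have h2d1 : 1 ≤ 2 ^ (d + 1) := Nat.one_le_two_pow
      have hrr : (m + 2 ^ d - 1) / 2 ^ d = (n + 2 ^ (d + 1) - 1) / 2 ^ (d + 1) := by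
        have e1 : n + 2 ^ (d + 1) - 1 = (n - 1) + 2 ^ (d + 1) := by omega
        have e2 : m + 2 ^ d - 1 = (m - 1) + 2 ^ d := by omega
        rw [e1, e2, Nat.add_div_right _ (by positivity), Nat.add_div_right _ (by positivity)]
        have e3 : m - 1 = (n - 1) / 2 := by omega
        rw [e3, Nat.div_div_eq_div_mul]
        congr 1
        rw [pow_succ, mul_comm]
      refine ⟨fun j => (f' (Fin.cast hrr.symm j)).biUnion G, ?_, ?_, ?_, Fin.snoc x' t, ?_⟩
      · intro j
        obtain ⟨i, hi⟩ := hne' (Fin.cast hrr.symm j)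
        exact Finset.biUnion_nonempty.2 ⟨i, hi, ⟨_, hGmem i⟩⟩
      · intro j j' hjj'
        rw [Finset.disjoint_left]
        intro k hk hk'
        obtain ⟨i, hi, hki⟩ := Finset.mem_biUnion.1 hk
        obtain ⟨i', hi', hki'⟩ := Finset.mem_biUnion.1 hk'
        have hii' : i = i' := by
          by_contra hc
          exact (Finset.disjoint_left.1 (hGdisj i i' hc)) hki hki'
        subst hii'
        have : Fin.cast hrr.symm j ≠ Fin.cast hrr.symm j' := by
          intro hc
          exact hjj' (Fin.ext (by simpa using congrArg Fin.val hc))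
        exact (Finset.disjoint_left.1 (hdisj' _ _ this)) hi hi'
      · intro k
        set l := σ.symm k with hl
        have hkl : σ l = k := σ.apply_symm_apply k
        by_cases hlm : (l : ℕ) < m
        · obtain ⟨j', hj'⟩ := hcov' ⟨(l : ℕ), hlm⟩
          refine ⟨Fin.cast hrr j', Finset.mem_biUnion.2 ⟨⟨(l : ℕ), hlm⟩, ?_, ?_⟩⟩
          · have : Fin.cast hrr.symm (Fin.cast hrr j') = j' := Fin.ext rfl
            rw [this]; exact hj'
          · have : σ ⟨((⟨(l : ℕ), hlm⟩ : Fin m) : ℕ), by omega⟩ = k := by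
              exact hkl
            rw [← this]
            exact hGmem _
        · have hll := l.isLt
          have him : (l : ℕ) - m < m := by omega
          obtain ⟨j', hj'⟩ := hcov' ⟨(l : ℕ) - m, him⟩
          refine ⟨Fin.cast hrr j', Finset.mem_biUnion.2 ⟨⟨(l : ℕ) - m, him⟩, ?_, ?_⟩⟩
          · have : Fin.cast hrr.symm (Fin.cast hrr j') = j' := Fin.ext rfl
            rw [this]; exact hj'
          · have hin' : ((⟨(l : ℕ) - m, him⟩ : Fin m) : ℕ) + m < n := by
              show (l : ℕ) - m + m < n; omega
            simp only [hG]
            rw [dif_pos hin']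
            refine Finset.mem_insert.2 (Or.inr (Finset.mem_singleton.2 ?_))
            rw [← hkl]
            congr 1
            exact Fin.ext (by show (l : ℕ) = (l : ℕ) - m + m; omega)
      · intro j
        set j' := Fin.cast hrr.symm j with hj'
        have h1 : x' ∈ convexHull ℝ ((fun i => Fin.init (z i)) '' ↑(f' j')) := hx' j'
        have h2 : Fin.snoc x' t ∈ (snocAff d t) '' (convexHull ℝ
            ((fun i => Fin.init (z i)) '' ↑(f' j'))) := ⟨x', h1, rfl⟩
        rw [AffineMap.image_convexHull] at h2
        have h3 : (snocAff d t) '' ((fun i => Fin.init (z i)) '' ↑(f' j'))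
            = (fun i => z i) '' ↑(f' j') := by
          rw [Set.image_image]
          apply Set.image_congr
          intro i _
          show Fin.snoc (Fin.init (z i)) t = z i
          rw [← hz2 i]
          exact Fin.snoc_init_self _
        rw [h3] at h2
        refine convexHull_min ?_ (convex_convexHull ℝ _) h2
        intro w hw
        obtain ⟨i, hi, rfl⟩ := hw
        refine convexHull_mono ?_ (hz1 i)
        apply Set.image_mono
        rw [Finset.coe_subset]
        exact Finset.subset_biUnion_of_mem G hi

/-- Weak Tverberg theorem: any set of `n` points in `ℝ^d` can be partitioned into
`⌈n/2^d⌉` sets whose convex hulls have a common point. -/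
theorem weak_tverberg_theorem (d : ℕ) (P : Finset (EuclideanSpace ℝ (Fin d))) :
    ∃ f : Fin ((P.card + 2 ^ d - 1) / 2 ^ d) → Finset (EuclideanSpace ℝ (Fin d)),
      (∀ i, (f i).Nonempty) ∧
      (∀ i j, i ≠ j → Disjoint (f i) (f j)) ∧
      (∀ p ∈ P, ∃ i, p ∈ f i) ∧ (∀ i, f i ⊆ P) ∧
      ∃ x : EuclideanSpace ℝ (Fin d),
        ∀ i, x ∈ convexHull ℝ ((f i : Set (EuclideanSpace ℝ (Fin d)))) := by
  classical
  set e : Fin P.card ≃ {x // x ∈ P} := P.equivFin.symm with he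
  obtain ⟨f', hne', hdisj', hcov', x', hx'⟩ :=
    tverberg_aux d P.card (fun k => (e k : EuclideanSpace ℝ (Fin d)))
  have hinj : Function.Injective (fun k : Fin P.card => (e k : EuclideanSpace ℝ (Fin d))) :=
    Subtype.val_injective.comp e.injective
  refine ⟨fun i => (f' i).image (fun k => (e k : EuclideanSpace ℝ (Fin d))),
    fun i => (hne' i).image _, ?_, ?_, ?_, WithLp.toLp 2 x', ?_⟩
  · intro i j hij
    exact (Finset.disjoint_image hinj).2 (hdisj' i j hij)
  · intro q hq
    obtain ⟨i, hk⟩ := hcov' (e.symm ⟨q, hq⟩)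
    exact ⟨i, Finset.mem_image.2 ⟨_, hk, by simp⟩⟩
  · intro i q hq
    obtain ⟨k, _, rfl⟩ := Finset.mem_image.1 hq
    exact (e k).2
  · intro i
    rw [Finset.coe_image]
    have := Set.mem_image_of_mem (WithLp.linearEquiv 2 ℝ (Fin d → ℝ)).symm.toLinearMap (hx' i)
    rw [LinearMap.image_convexHull, Set.image_image] at this
    simpa using this
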